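/- Let 2 ≤ c ≤ min{n,s}. Then the symbolic square of the star configuration ideal decomposes as I_{c,F}^{(2)} = I_{c−1,F} + I_{c,F}^2. -/

import Mathlib

set_option linter.unusedSectionVars false
set_option linter.unusedVariables false
set_option maxHeartbeats 1000000

namespace StarCfg

variable {R : Type*} [CommRing R] {ι : Type*} [DecidableEq ι]

/-- Ideal generated by the `f i`, `i ∈ T`. -/
noncomputable def pS (f : ι → R) (T : Finset ι) : Ideal R := Ideal.span (f '' ↑T)

/-- The star configuration ideal over ground set `U`. -/
noncomputable def IeD (f : ι → R) (e : ℕ) (U : Finset ι) : Ideal R :=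
  ⨅ (T : Finset ι) (_ : T ⊆ U ∧ T.card = e), pS f T

/-- The colon condition we extract from the regular sequence hypothesis. -/
def HC (f : ι → R) (k : ℕ) : Prop :=
  ∀ (A : Finset ι) (g : ι), g ∉ A → A.card < k →
    ∀ z : R, z * f g ∈ pS f A → z ∈ pS f A

variable {f : ι → R}

lemma pS_mono {T T' : Finset ι} (h : T ⊆ T') : pS f T ≤ pS f T' :=
  Ideal.span_mono (Set.image_mono (by exact_mod_cast h))

lemma pS_empty : pS f ∅ = ⊥ := by simp [pS]

lemma pS_insert (j : ι) (T : Finset ι) :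
    pS f (insert j T) = pS f T + Ideal.span {f j} := by
  simp only [pS, Finset.coe_insert, Set.image_insert_eq, Ideal.span_insert]
  rw [Ideal.add_eq_sup, sup_comm]

lemma pS_union (T W : Finset ι) : pS f (T ∪ W) = pS f T + pS f W := by
  simp only [pS, Finset.coe_union, Set.image_union, Ideal.span_union, Ideal.add_eq_sup]

lemma mem_pS_self {j : ι} {T : Finset ι} (h : j ∈ T) : f j ∈ pS f T :=
  Ideal.subset_span ⟨j, by simpa using h⟩

lemma mem_IeD_iff {e : ℕ} {U : Finset ι} {x : R} :
    x ∈ IeD f e U ↔ ∀ T : Finset ι, T ⊆ U → T.card = e → x ∈ pS f T := by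
  simp only [IeD, Ideal.mem_iInf]
  exact ⟨fun h T h1 h2 => h T ⟨h1, h2⟩, fun h T ht => h T ht.1 ht.2⟩

lemma IeD_le_pS {e : ℕ} {U T : Finset ι} (h1 : T ⊆ U) (h2 : T.card = e) :
    IeD f e U ≤ pS f T := fun _ hx => mem_IeD_iff.mp hx T h1 h2

/-- Monotonicity workhorse. -/
lemma IeD_le_IeD {e' e : ℕ} {U' U : Finset ι}
    (hcard : ∀ T : Finset ι, T ⊆ U → T.card = e → e' ≤ (T ∩ U').card) :
    IeD f e' U' ≤ IeD f e U := by
  intro x hx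
  rw [mem_IeD_iff] at hx ⊢
  intro T hT hTc
  obtain ⟨T', hT'sub, hT'card⟩ := Finset.exists_subset_card_eq (hcard T hT hTc)
  exact pS_mono (hT'sub.trans Finset.inter_subset_left)
    (hx T' (hT'sub.trans Finset.inter_subset_right) hT'card)

/- ### generic ideal helpers -/

lemma mem_add_iff {I J : Ideal R} {x : R} :
    x ∈ I + J ↔ ∃ y ∈ I, ∃ z ∈ J, y + z = x := by
  rw [Ideal.add_eq_sup, Submodule.mem_sup]

lemma le_add_left' {I J : Ideal R} : I ≤ I + J := by
  rw [Ideal.add_eq_sup]; exact le_sup_left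

lemma le_add_right' {I J : Ideal R} : J ≤ I + J := by
  rw [Ideal.add_eq_sup]; exact le_sup_right

lemma sq_add_span_le (A : Ideal R) (g : R) :
    (A + Ideal.span {g}) ^ 2 ≤ A ^ 2 + A * Ideal.span {g} + Ideal.span {g ^ 2} := by
  rw [sq, sq]
  refine Ideal.mul_le.mpr ?_
  intro r hr s hs
  rw [mem_add_iff] at hr hs
  obtain ⟨a₁, ha₁, b₁, hb₁, rfl⟩ := hr
  obtain ⟨a₂, ha₂, b₂, hb₂, rfl⟩ := hs
  rw [Ideal.mem_span_singleton] at hb₁ hb₂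
  obtain ⟨t₁, rfl⟩ := hb₁
  obtain ⟨t₂, rfl⟩ := hb₂
  have e : (a₁ + g * t₁) * (a₂ + g * t₂)
      = a₁ * a₂ + (a₁ * (g * t₂) + a₂ * (g * t₁)) + (t₁ * t₂) * g ^ 2 := by ring
  rw [e]
  refine Ideal.add_mem _ (Ideal.add_mem _ ?_ ?_) ?_
  · exact Submodule.mem_sup_left (Submodule.mem_sup_left (Ideal.mul_mem_mul ha₁ ha₂))
  · refine Submodule.mem_sup_left (Submodule.mem_sup_right ?_)
    refine Ideal.add_mem _ ?_ ?_
    · exact Ideal.mul_mem_mul ha₁ (Ideal.mem_span_singleton.mpr ⟨t₂, rfl⟩)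
    · exact Ideal.mul_mem_mul ha₂ (Ideal.mem_span_singleton.mpr ⟨t₁, rfl⟩)
  · exact Submodule.mem_sup_right (Ideal.mem_span_singleton.mpr ⟨t₁ * t₂, by ring⟩)

lemma sq_le_of_le {A B : Ideal R} (h : A ≤ B) : A ^ 2 ≤ B ^ 2 := by
  rw [sq, sq]; exact Ideal.mul_mono h h

lemma sq_le_self (A : Ideal R) : A ^ 2 ≤ A := Ideal.pow_le_self two_ne_zero

lemma mem_sq {A : Ideal R} {x y : R} (hx : x ∈ A) (hy : y ∈ A) : x * y ∈ A ^ 2 := by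
  rw [sq]; exact Ideal.mul_mem_mul hx hy

/-- Decompose an element of `pS (insert t T) ^ 2`. -/
lemma sq_insert_decomp {T : Finset ι} {t : ι} {x : R} (hx : x ∈ pS f (insert t T) ^ 2) :
    ∃ a ∈ pS f T ^ 2, ∃ b ∈ pS f T, ∃ r : R, a + b * f t + r * (f t) ^ 2 = x := by
  rw [pS_insert] at hx
  have h := sq_add_span_le (pS f T) (f t) hx
  rw [mem_add_iff] at h
  obtain ⟨y, hy, q, hq, hyq⟩ := h
  rw [mem_add_iff] at hy
  obtain ⟨a, ha, m, hm, ham⟩ := hy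
  rw [Ideal.mem_mul_span_singleton] at hm
  obtain ⟨b, hb, rfl⟩ := hm
  rw [Ideal.mem_span_singleton] at hq
  obtain ⟨r, rfl⟩ := hq
  exact ⟨a, ha, b, hb, r, by rw [← hyq, ← ham]; ring⟩

/- ### The colon lemma for squares: `(pS T ^ 2 + pS W : f g) = pS T ^ 2 + pS W` -/

lemma P2W {k : ℕ} (hk : HC f k) (T : Finset ι) :
    ∀ (W : Finset ι) (g : ι), Disjoint T W → g ∉ T → g ∉ W → T.card + W.card < k →
      ∀ z : R, z * f g ∈ pS f T ^ 2 + pS f W → z ∈ pS f T ^ 2 + pS f W := by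
  induction T using Finset.induction with
  | empty =>
    intro W g _ _ hgW hcard z hz
    rw [pS_empty] at hz ⊢
    have h0 : ((⊥ : Ideal R) ^ 2 + pS f W) = pS f W := by
      rw [sq, Ideal.mul_bot, Ideal.add_eq_sup, bot_sup_eq]
    rw [h0] at hz ⊢
    exact hk W g hgW (by simpa using hcard) z hz
  | @insert t T' htT' ih =>
    intro W g hdisj hgT hgW hcard z hz
    have htW : t ∉ W := Finset.disjoint_left.mp hdisj (Finset.mem_insert_self t T')
    have hdisj' : Disjoint T' W :=
      Finset.disjoint_of_subset_left (Finset.subset_insert t T') hdisj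
    have hgT' : g ∉ T' := fun h => hgT (Finset.mem_insert_of_mem h)
    have hgt : g ≠ t := fun h => hgT (h ▸ Finset.mem_insert_self t T')
    have hcardins : (insert t T').card = T'.card + 1 := Finset.card_insert_of_notMem htT'
    set A := pS f T' with hA
    -- decompose z * f g
    rw [mem_add_iff] at hz
    obtain ⟨u, hu, w₂, hw₂, huw⟩ := hz
    obtain ⟨a₀, ha₀, b₀, hb₀, r₀, hdec⟩ := sq_insert_decomp hu
    -- z * f g = a₀ + b₀ * f t + r₀ * (f t)^2 + w₂
    have hzfg : z * f g = a₀ + b₀ * f t + r₀ * (f t) ^ 2 + w₂ := by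
      rw [← huw, ← hdec]
    -- step 1: z ∈ A^2 + pS (insert t W)
    have hz1 : z ∈ A ^ 2 + pS f (insert t W) := by
      refine ih (insert t W) g ?_ hgT' ?_ ?_ z ?_
      · simp only [Finset.disjoint_insert_right]
        exact ⟨htT', hdisj'⟩
      · simp only [Finset.mem_insert, not_or]
        exact ⟨hgt, hgW⟩
      · rw [Finset.card_insert_of_notMem htW]
        omega
      · rw [mem_add_iff]
        refine ⟨a₀, ha₀, (b₀ + r₀ * f t) * f t + w₂, ?_, by rw [hzfg]; ring⟩
        refine Ideal.add_mem _ ?_ ?_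
        · exact Ideal.mul_mem_left _ _ (mem_pS_self (Finset.mem_insert_self t W))
        · exact pS_mono (Finset.subset_insert t W) hw₂
    -- decompose z = α + w₀ + β * f t
    rw [mem_add_iff] at hz1
    obtain ⟨α, hα, w', hw', hzdec⟩ := hz1
    rw [pS_insert, mem_add_iff] at hw'
    obtain ⟨w₀, hw₀, bb, hbb, hwdec⟩ := hw'
    rw [Ideal.mem_span_singleton] at hbb
    obtain ⟨β, rfl⟩ := hbb
    -- z = α + w₀ + β * f t
    have hzdec' : z = α + w₀ + β * f t := by rw [← hzdec, ← hwdec]; ring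
    -- (β * f g - b₀ - r₀ * f t) * f t ∈ A^2 + pS W
    have hkey : (β * f g - b₀ - r₀ * f t) * f t ∈ A ^ 2 + pS f W := by
      have hident : (β * f g - b₀ - r₀ * f t) * f t
          = (a₀ - α * f g) + (w₂ - w₀ * f g) := by
        have : z * f g = (α + w₀ + β * f t) * f g := by rw [← hzdec']
        rw [hzfg] at this
        linear_combination -this
      rw [hident, mem_add_iff]
      exact ⟨a₀ - α * f g, Ideal.sub_mem _ ha₀ (Ideal.mul_mem_right _ _ hα),
        w₂ - w₀ * f g, Ideal.sub_mem _ hw₂ (Ideal.mul_mem_right _ _ hw₀), rfl⟩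
    have hkey2 : β * f g - b₀ - r₀ * f t ∈ A ^ 2 + pS f W := by
      refine ih W t hdisj' htT' htW (by omega) _ ?_
      exact hkey
    -- β * f g ∈ pS (insert t T' ∪ W)
    have hβfg : β * f g ∈ pS f (insert t T' ∪ W) := by
      rw [mem_add_iff] at hkey2
      obtain ⟨a₁, ha₁, w₁, hw₁, h1⟩ := hkey2
      have hre : β * f g = a₁ + w₁ + b₀ + r₀ * f t := by linear_combination -h1
      rw [hre]
      have hTsub : T' ⊆ insert t T' ∪ W :=
        (Finset.subset_insert t T').trans Finset.subset_union_left
      refine Ideal.add_mem _ (Ideal.add_mem _ (Ideal.add_mem _ ?_ ?_) ?_) ?_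
      · exact pS_mono hTsub (sq_le_self A ha₁)
      · exact pS_mono Finset.subset_union_right hw₁
      · exact pS_mono hTsub hb₀
      · exact Ideal.mul_mem_left _ _
          (mem_pS_self (Finset.mem_union_left _ (Finset.mem_insert_self t T')))
    -- colon with g
    have hβ : β ∈ pS f (insert t T' ∪ W) := by
      refine hk _ g ?_ ?_ β hβfg
      · simp only [Finset.mem_union, not_or]
        exact ⟨hgT, hgW⟩
      · rw [Finset.card_union_of_disjoint hdisj]
        omega
    rw [pS_union, mem_add_iff] at hβ
    obtain ⟨β₁, hβ₁, β₂, hβ₂, hβdec⟩ := hβ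
    -- final assembly
    rw [mem_add_iff]
    refine ⟨α + β₁ * f t, ?_, w₀ + β₂ * f t, ?_, by rw [hzdec']; linear_combination f t * hβdec⟩
    · refine Ideal.add_mem _ ?_ ?_
      · exact sq_le_of_le (pS_mono (Finset.subset_insert t T')) hα
      · exact mem_sq hβ₁ (mem_pS_self (Finset.mem_insert_self t T'))
    · exact Ideal.add_mem _ hw₀ (Ideal.mul_mem_right _ _ hβ₂)


lemma span_singleton_le_pS {j : ι} {T : Finset ι} (h : j ∈ T) :
    Ideal.span {f j} ≤ pS f T := by
  rw [Ideal.span_le, Set.singleton_subset_iff]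
  exact mem_pS_self h

lemma IeD_le_pS_of_le {e : ℕ} {U T : Finset ι} (h1 : T ⊆ U) (h2 : e ≤ T.card) :
    IeD f e U ≤ pS f T := by
  obtain ⟨T', hsub, hcard⟩ := Finset.exists_subset_card_eq h2
  exact le_trans (IeD_le_pS (hsub.trans h1) hcard) (pS_mono hsub)

lemma IeD_eq_top_of_card_lt {e : ℕ} {U : Finset ι} (h : U.card < e) :
    IeD f e U = ⊤ := by
  rw [eq_top_iff]
  intro x _
  rw [mem_IeD_iff]
  intro T hT hTc
  exact absurd ((hTc ▸ Finset.card_le_card hT).trans_lt h) (lt_irrefl _)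

/- ### Lemma AW : the intersection of the codimension-one subideals of a
complete-intersection lands in its square (modulo `pS W`). -/

lemma AW {k : ℕ} (hk : HC f k) (S : Finset ι) :
    ∀ (W : Finset ι), S.Nonempty → Disjoint S W → S.card + W.card ≤ k →
      ∀ x : R, (∀ T : Finset ι, T ⊆ S → T.card + 1 = S.card → x ∈ pS f T + pS f W) →
        x ∈ pS f S ^ 2 + pS f W := by
  induction S using Finset.induction with
  | empty => intro W hne; exact absurd hne (by simp)
  | @insert l S' hlS' ih =>
    intro W hne hdisj hcard x hx
    have hlW : l ∉ W := Finset.disjoint_left.mp hdisj (Finset.mem_insert_self l S')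
    have hdisj' : Disjoint S' W :=
      Finset.disjoint_of_subset_left (Finset.subset_insert l S') hdisj
    have hcardins : (insert l S').card = S'.card + 1 := Finset.card_insert_of_notMem hlS'
    rcases Finset.eq_empty_or_nonempty S' with h0 | hS'ne
    · -- S = {l} : use T = ∅
      subst h0
      have h1 := hx ∅ (Finset.empty_subset _) (by simp)
      rw [pS_empty, Ideal.add_eq_sup, bot_sup_eq] at h1
      exact le_add_right' h1
    · -- main case
      have hx1 : x ∈ pS f S' + pS f W :=
        hx S' (Finset.subset_insert l S') (by omega)
      have hIH : x ∈ pS f S' ^ 2 + pS f (insert l W) := by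
        refine ih (insert l W) hS'ne ?_ ?_ x ?_
        · simp only [Finset.disjoint_insert_right]
          exact ⟨hlS', hdisj'⟩
        · rw [Finset.card_insert_of_notMem hlW]; omega
        · intro T hT hTc
          have hlT : l ∉ T := fun h => hlS' (hT h)
          have h2 := hx (insert l T) (Finset.insert_subset_insert l hT)
            (by rw [Finset.card_insert_of_notMem hlT]; omega)
          rw [mem_add_iff] at h2
          obtain ⟨p, hp, q, hq, hpq⟩ := h2
          rw [pS_insert, mem_add_iff] at hp
          obtain ⟨p₁, hp₁, p₂, hp₂, hpd⟩ := hp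
          rw [mem_add_iff]
          refine ⟨p₁, hp₁, p₂ + q, ?_, by linear_combination hpq + hpd⟩
          exact Ideal.add_mem _ (span_singleton_le_pS (Finset.mem_insert_self l W) hp₂)
            (pS_mono (Finset.subset_insert l W) hq)
      -- decompose hIH : x = y + w + f l * r
      rw [mem_add_iff] at hIH
      obtain ⟨y, hy, q, hq, hyq⟩ := hIH
      rw [pS_insert, mem_add_iff] at hq
      obtain ⟨w, hw, m, hm, hwm⟩ := hq
      rw [Ideal.mem_span_singleton] at hm
      obtain ⟨r, rfl⟩ := hm
      -- r * f l ∈ pS S' + pS W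
      rw [mem_add_iff] at hx1
      obtain ⟨p, hp, q₀, hq₀, hpq₀⟩ := hx1
      have hrfl : r * f l ∈ pS f (S' ∪ W) := by
        rw [pS_union, mem_add_iff]
        exact ⟨p - y, Ideal.sub_mem _ hp (sq_le_self _ hy),
          q₀ - w, Ideal.sub_mem _ hq₀ hw, by linear_combination hpq₀ - hyq - hwm⟩
      have hr : r ∈ pS f (S' ∪ W) := by
        refine hk _ l ?_ ?_ r hrfl
        · simp only [Finset.mem_union, not_or]; exact ⟨hlS', hlW⟩
        · calc (S' ∪ W).card ≤ S'.card + W.card := Finset.card_union_le _ _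
            _ < k := by omega
      rw [pS_union, mem_add_iff] at hr
      obtain ⟨r₁, hr₁, r₂, hr₂, hrd⟩ := hr
      rw [mem_add_iff]
      refine ⟨y + r₁ * f l, ?_, w + r₂ * f l, ?_, ?_⟩
      · refine Ideal.add_mem _ ?_ ?_
        · exact sq_le_of_le (pS_mono (Finset.subset_insert l S')) hy
        · exact mem_sq (pS_mono (Finset.subset_insert l S') hr₁)
            (mem_pS_self (Finset.mem_insert_self l S'))
      · exact Ideal.add_mem _ hw (Ideal.mul_mem_right _ _ hr₂)
      · linear_combination hyq + hwm + (f l) * hrd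

/- ### Lemma G4W : intersections of `pS T + pS W` over all `e`-subsets. -/

lemma G4W {k : ℕ} (hk : HC f k) (V : Finset ι) :
    ∀ (e : ℕ) (W : Finset ι) (x : R), Disjoint V W → e + W.card < k →
      (∀ T : Finset ι, T ⊆ V → T.card = e → x ∈ pS f T + pS f W) →
      x ∈ IeD f e V + pS f W := by
  induction V using Finset.induction with
  | empty =>
    intro e W x _ _ hx
    cases e with
    | zero =>
      have h1 := hx ∅ (Finset.Subset.refl _) rfl
      rw [pS_empty, Ideal.add_eq_sup, bot_sup_eq] at h1
      exact le_add_right' h1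
    | succ e' =>
      have : x ∈ IeD f (e' + 1) (∅ : Finset ι) := by
        rw [IeD_eq_top_of_card_lt (by simp)]; trivial
      exact le_add_left' this
  | @insert l V' hlV' ih =>
    intro e W x hdisj hcard hx
    have hlW : l ∉ W := Finset.disjoint_left.mp hdisj (Finset.mem_insert_self l V')
    have hdisj' : Disjoint V' W :=
      Finset.disjoint_of_subset_left (Finset.subset_insert l V') hdisj
    cases e with
    | zero =>
      have h1 := hx ∅ (Finset.empty_subset _) rfl
      rw [pS_empty, Ideal.add_eq_sup, bot_sup_eq] at h1
      exact le_add_right' h1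
    | succ e'' =>
      set e := e'' + 1 with hedef
      -- x ∈ IeD e V' + pS W
      have hA : x ∈ IeD f e V' + pS f W := by
        refine ih e W x hdisj' hcard ?_
        intro T hT hTc
        exact hx T (hT.trans (Finset.subset_insert l V')) hTc
      -- x ∈ IeD e'' V' + pS (insert l W)
      have hB : x ∈ IeD f e'' V' + pS f (insert l W) := by
        refine ih e'' (insert l W) x ?_ ?_ ?_
        · simp only [Finset.disjoint_insert_right]; exact ⟨hlV', hdisj'⟩
        · rw [Finset.card_insert_of_notMem hlW]; omega
        · intro T hT hTc
          have hlT : l ∉ T := fun h => hlV' (hT h)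
          have h2 := hx (insert l T) (Finset.insert_subset_insert l hT)
            (by rw [Finset.card_insert_of_notMem hlT, hTc])
          rw [mem_add_iff] at h2
          obtain ⟨p, hp, q, hq, hpq⟩ := h2
          rw [pS_insert, mem_add_iff] at hp
          obtain ⟨p₁, hp₁, p₂, hp₂, hpd⟩ := hp
          rw [mem_add_iff]
          refine ⟨p₁, hp₁, p₂ + q, ?_, by linear_combination hpq + hpd⟩
          exact Ideal.add_mem _ (span_singleton_le_pS (Finset.mem_insert_self l W) hp₂)
            (pS_mono (Finset.subset_insert l W) hq)
      -- decompose
      rw [mem_add_iff] at hA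
      obtain ⟨a, ha, w, hw, haw⟩ := hA
      rw [mem_add_iff] at hB
      obtain ⟨b, hb, q, hq, hbq⟩ := hB
      rw [pS_insert, mem_add_iff] at hq
      obtain ⟨w', hw', m, hm, hwm⟩ := hq
      rw [Ideal.mem_span_singleton] at hm
      obtain ⟨s, rfl⟩ := hm
      -- s * f l ∈ pS T + pS W for every e-subset T of V'
      have hs : s ∈ IeD f e V' + pS f W := by
        refine ih e W s hdisj' hcard ?_
        intro T hT hTc
        have hsfl : s * f l ∈ pS f (T ∪ W) := by
          rw [pS_union, mem_add_iff]
          refine ⟨a - b, ?_, w - w', ?_, by linear_combination haw - hbq - hwm⟩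
          · refine Ideal.sub_mem _ (IeD_le_pS hT hTc ha) ?_
            exact IeD_le_pS_of_le hT (by omega) hb
          · exact Ideal.sub_mem _ hw hw'
        have hsT : s ∈ pS f (T ∪ W) := by
          refine hk _ l ?_ ?_ s hsfl
          · simp only [Finset.mem_union, not_or]
            exact ⟨fun h => hlV' (hT h), hlW⟩
          · calc (T ∪ W).card ≤ T.card + W.card := Finset.card_union_le _ _
              _ < k := by omega
        rwa [pS_union] at hsT
      rw [mem_add_iff] at hs
      obtain ⟨a₁, ha₁, w₁, hw₁, hsd⟩ := hs
      -- y := b + a₁ * f l ∈ IeD e V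
      have hy : b + a₁ * f l ∈ IeD f e (insert l V') := by
        rw [mem_IeD_iff]
        intro T hT hTc
        by_cases hlT : l ∈ T
        · refine Ideal.add_mem _ ?_ ?_
          · have hTV' : T.erase l ⊆ V' := by
              intro i hi
              have := hT (Finset.mem_of_mem_erase hi)
              rcases Finset.mem_insert.mp this with h | h
              · exact absurd h (Finset.ne_of_mem_erase hi)
              · exact h
            have hcb : e'' ≤ (T.erase l).card := by
              rw [Finset.card_erase_of_mem hlT, hTc]; omega
            exact pS_mono (Finset.erase_subset l T) (IeD_le_pS_of_le hTV' hcb hb)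
          · exact Ideal.mul_mem_left _ _ (mem_pS_self hlT)
        · have hTV' : T ⊆ V' := fun i hi => by
            rcases Finset.mem_insert.mp (hT hi) with h | h
            · exact absurd (h ▸ hi) hlT
            · exact h
          refine Ideal.add_mem _ ?_ ?_
          · exact IeD_le_pS_of_le hTV' (by omega) hb
          · exact Ideal.mul_mem_right _ _ (IeD_le_pS hTV' hTc ha₁)
      rw [mem_add_iff]
      refine ⟨b + a₁ * f l, hy, w' + w₁ * f l, ?_, ?_⟩
      · exact Ideal.add_mem _ hw' (Ideal.mul_mem_right _ _ hw₁)
      · linear_combination hbq + hwm + (f l) * hsd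


lemma pS_singleton (l : ι) : pS f {l} = Ideal.span {f l} := by simp [pS]

/-- Colon with a product of the `f i`. -/
lemma prod_colon {k : ℕ} (hk : HC f k) {l : ι} {W : Finset ι} (hlW : l ∉ W)
    (hcard : 1 + W.card < k) (U' : Finset ι) (hmem : ∀ i ∈ U', i ≠ l ∧ i ∉ W) :
    ∀ z : R, z * ∏ i ∈ U', f i ∈ pS f {l} ^ 2 + pS f W →
      z ∈ pS f {l} ^ 2 + pS f W := by
  induction U' using Finset.induction with
  | empty => intro z hz; simpa using hz
  | @insert i U'' hiU'' ih =>
    intro z hz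
    rw [Finset.prod_insert hiU''] at hz
    have h1 : (z * ∏ j ∈ U'', f j) * f i ∈ pS f {l} ^ 2 + pS f W := by
      have : z * (f i * ∏ j ∈ U'', f j) = (z * ∏ j ∈ U'', f j) * f i := by ring
      rwa [this] at hz
    have h2 := P2W hk {l} W i
      (Finset.disjoint_singleton_left.mpr hlW)
      (by simpa using (hmem i (Finset.mem_insert_self i U'')).1)
      (hmem i (Finset.mem_insert_self i U'')).2
      (by simpa using hcard) _ h1
    exact ih (fun j hj => hmem j (Finset.mem_insert_of_mem hj)) _ h2

/-- The `c = 1` base case : intersection of the `(f i)²` is the square of the product. -/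
lemma SQPROD {k : ℕ} (hk : HC f k) (U : Finset ι) :
    ∀ (W : Finset ι), Disjoint U W → 1 + W.card < k →
      ∀ x : R, (∀ i ∈ U, x ∈ pS f {i} ^ 2 + pS f W) →
        x ∈ Ideal.span {(∏ i ∈ U, f i) ^ 2} + pS f W := by
  induction U using Finset.induction with
  | empty =>
    intro W _ _ x _
    refine le_add_left' ?_
    rw [Finset.prod_empty, one_pow, Ideal.span_singleton_one]
    trivial
  | @insert l U' hlU' ih =>
    intro W hdisj hcard x hx
    have hlW : l ∉ W := Finset.disjoint_left.mp hdisj (Finset.mem_insert_self l U')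
    have hdisj' : Disjoint U' W :=
      Finset.disjoint_of_subset_left (Finset.subset_insert l U') hdisj
    have hIH : x ∈ Ideal.span {(∏ i ∈ U', f i) ^ 2} + pS f W :=
      ih W hdisj' hcard x (fun i hi => hx i (Finset.mem_insert_of_mem hi))
    rw [mem_add_iff] at hIH
    obtain ⟨y, hy, w, hw, hyw⟩ := hIH
    rw [Ideal.mem_span_singleton] at hy
    obtain ⟨a, rfl⟩ := hy
    -- (∏ U')² * a ∈ pS {l}² + pS W
    have hmem' : ∀ i ∈ U', i ≠ l ∧ i ∉ W := by
      intro i hi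
      exact ⟨fun h => hlU' (h ▸ hi), Finset.disjoint_left.mp hdisj' hi⟩
    have hstep : a ∈ pS f {l} ^ 2 + pS f W := by
      have h0 : (∏ i ∈ U', f i) ^ 2 * a ∈ pS f {l} ^ 2 + pS f W := by
        have hxl := hx l (Finset.mem_insert_self l U')
        rw [mem_add_iff] at hxl ⊢
        obtain ⟨p, hp, q, hq, hpq⟩ := hxl
        exact ⟨p, hp, q - w, Ideal.sub_mem _ hq hw, by linear_combination hpq - hyw⟩
      have h1 : (a * ∏ i ∈ U', f i) * ∏ i ∈ U', f i ∈ pS f {l} ^ 2 + pS f W := by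
        have : (a * ∏ i ∈ U', f i) * ∏ i ∈ U', f i = (∏ i ∈ U', f i) ^ 2 * a := by ring
        rwa [this]
      exact prod_colon hk hlW hcard U' hmem' a
        (prod_colon hk hlW hcard U' hmem' _ h1)
    -- decompose a
    rw [mem_add_iff] at hstep
    obtain ⟨p, hp, w', hw', haw⟩ := hstep
    rw [pS_singleton, Ideal.span_singleton_pow, Ideal.mem_span_singleton] at hp
    obtain ⟨b, rfl⟩ := hp
    rw [mem_add_iff]
    refine ⟨(∏ i ∈ insert l U', f i) ^ 2 * b, ?_, (∏ i ∈ U', f i) ^ 2 * w' + w, ?_, ?_⟩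
    · exact Ideal.mem_span_singleton.mpr ⟨b, rfl⟩
    · exact Ideal.add_mem _ (Ideal.mul_mem_left _ _ hw') hw
    · rw [Finset.prod_insert hlU']
      linear_combination hyw + (∏ i ∈ U', f i)^2 * haw


/- ### helpers for the main induction -/

lemma AW0 {k : ℕ} (hk : HC f k) {T : Finset ι} (hne : T.Nonempty) (hcard : T.card ≤ k)
    {x : R} (hx : ∀ T' : Finset ι, T' ⊆ T → T'.card + 1 = T.card → x ∈ pS f T') :
    x ∈ pS f T ^ 2 := by
  have h := AW hk T ∅ hne (by simp) (by simpa using hcard) x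
    (fun T' h1 h2 => le_add_left' (hx T' h1 h2))
  rwa [pS_empty, Ideal.add_eq_sup, sup_bot_eq] at h

lemma mul_f_mem_IeD {e : ℕ} {U : Finset ι} {j : ι} (hj : j ∈ U) {θ : R}
    (hθ : θ ∈ IeD f e (U.erase j)) : θ * f j ∈ IeD f e U := by
  rw [mem_IeD_iff] at hθ ⊢
  intro T hT hTc
  by_cases hjT : j ∈ T
  · exact Ideal.mul_mem_left _ _ (mem_pS_self hjT)
  · exact Ideal.mul_mem_right _ _
      (hθ T (Finset.subset_erase.mpr ⟨hT, hjT⟩) hTc)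

lemma IeD_erase_le {e' e : ℕ} {U : Finset ι} (j : ι) (h : e' < e) :
    IeD f e' (U.erase j) ≤ IeD f e U := by
  refine IeD_le_IeD ?_
  intro T hT hTc
  have h1 : T.erase j ⊆ T ∩ U.erase j := by
    intro i hi
    refine Finset.mem_inter.mpr ⟨Finset.mem_of_mem_erase hi, ?_⟩
    exact Finset.mem_erase.mpr ⟨Finset.ne_of_mem_erase hi, hT (Finset.mem_of_mem_erase hi)⟩
  have h2 : T.card - 1 ≤ (T.erase j).card := Finset.pred_card_le_card_erase
  have h3 := Finset.card_le_card h1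
  omega

lemma mul_f_sq_mem_sq {e : ℕ} {U : Finset ι} {j : ι} (hj : j ∈ U) {z : R}
    (hz : z ∈ IeD f e (U.erase j) ^ 2) : z * (f j) ^ 2 ∈ IeD f e U ^ 2 := by
  rw [sq] at hz
  refine Submodule.mul_induction_on hz ?_ ?_
  · intro a ha b hb
    have h1 : a * f j ∈ IeD f e U := mul_f_mem_IeD hj ha
    have h2 : b * f j ∈ IeD f e U := mul_f_mem_IeD hj hb
    have : a * b * f j ^ 2 = (a * f j) * (b * f j) := by ring
    rw [this]
    exact mem_sq h1 h2
  · intro y z hy hz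
    have : (y + z) * f j ^ 2 = y * f j ^ 2 + z * f j ^ 2 := by ring
    rw [this]
    exact Ideal.add_mem _ hy hz

/- ### The main induction -/

lemma MAIN {k : ℕ} (hk : HC f k) :
    ∀ (N e : ℕ) (U W : Finset ι) (x : R), e + 1 + U.card ≤ N →
      Disjoint U W → e + 1 + W.card < k →
      (∀ S : Finset ι, S ⊆ U → S.card = e + 1 → x ∈ pS f S ^ 2 + pS f W) →
      x ∈ IeD f e U + IeD f (e + 1) U ^ 2 + pS f W := by
  intro N
  induction N with
  | zero => intro e U W x hN; omega
  | succ N ihN =>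
    intro e U W x hN hdisj hkcard hx
    cases e with
    | zero =>
      -- c = 1 : products
      have h1 : x ∈ Ideal.span {(∏ i ∈ U, f i) ^ 2} + pS f W := by
        refine SQPROD hk U W hdisj (by omega) x ?_
        intro i hi
        exact hx {i} (Finset.singleton_subset_iff.mpr hi) (Finset.card_singleton i)
      rw [mem_add_iff] at h1
      obtain ⟨y, hy, w, hw, hyw⟩ := h1
      rw [Ideal.mem_span_singleton] at hy
      obtain ⟨b, rfl⟩ := hy
      have hprod : (∏ i ∈ U, f i) ∈ IeD f (0 + 1) U := by
        rw [mem_IeD_iff]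
        intro T hT hTc
        obtain ⟨i, rfl⟩ := Finset.card_eq_one.mp hTc
        rw [pS_singleton, Ideal.mem_span_singleton]
        exact Finset.dvd_prod_of_mem f (hT (Finset.mem_singleton_self i))
      have hsq : (∏ i ∈ U, f i) ^ 2 * b ∈ IeD f (0 + 1) U ^ 2 :=
        Ideal.mul_mem_right _ _ (Ideal.pow_mem_pow hprod 2)
      rw [mem_add_iff]
      refine ⟨0 + (∏ i ∈ U, f i) ^ 2 * b, ?_, w, hw, by linear_combination hyw⟩
      rw [mem_add_iff]
      exact ⟨0, Ideal.zero_mem _, (∏ i ∈ U, f i) ^ 2 * b, hsq, rfl⟩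
    | succ e' =>
      set e := e' + 1 with hedef
      rcases lt_trichotomy U.card (e + 1) with hUc | hUc | hUc
      · -- U too small : IeD (e+1) U = ⊤
        have htop : x ∈ IeD f (e + 1) U ^ 2 := by
          rw [IeD_eq_top_of_card_lt hUc, Ideal.top_pow]; trivial
        rw [mem_add_iff]
        exact ⟨0 + x, mem_add_iff.mpr ⟨0, Ideal.zero_mem _, x, htop, rfl⟩,
          0, Ideal.zero_mem _, by ring⟩
      · -- U.card = e + 1 : single subset
        have hU : x ∈ pS f U ^ 2 + pS f W := hx U (Finset.Subset.refl _) hUc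
        have hle : pS f U ≤ IeD f (e + 1) U := by
          rw [show pS f U ≤ IeD f (e+1) U ↔ ∀ y ∈ pS f U, y ∈ IeD f (e+1) U from Iff.rfl]
          intro y hy
          rw [mem_IeD_iff]
          intro T hT hTc
          have : T = U := Finset.eq_of_subset_of_card_le hT (by omega)
          rwa [this]
        rw [mem_add_iff] at hU
        obtain ⟨p, hp, q, hq, hpq⟩ := hU
        rw [mem_add_iff]
        exact ⟨0 + p, mem_add_iff.mpr ⟨0, Ideal.zero_mem _, p, sq_le_of_le hle hp, rfl⟩,
          q, hq, by linear_combination hpq⟩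
      · -- main case
        obtain ⟨j, hjU⟩ : U.Nonempty := Finset.card_pos.mp (by omega)
        set U' := U.erase j with hU'def
        have hjU' : j ∉ U' := Finset.notMem_erase j U
        have hU'sub : U' ⊆ U := Finset.erase_subset j U
        have hU'card : U'.card = U.card - 1 := Finset.card_erase_of_mem hjU
        have hdisj' : Disjoint U' W := Finset.disjoint_of_subset_left hU'sub hdisj
        have hjW : j ∉ W := Finset.disjoint_left.mp hdisj hjU
        -- step 1 : apply (c-1)-statement with W ∪ {j}
        have hstep1 : x ∈ IeD f e' U' + IeD f (e' + 1) U' ^ 2 + pS f (insert j W) := by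
          refine ihN e' U' (insert j W) x ?_ ?_ ?_ ?_
          · omega
          · simp only [Finset.disjoint_insert_right]; exact ⟨hjU', hdisj'⟩
          · rw [Finset.card_insert_of_notMem hjW]; omega
          · intro S' hS' hS'c
            have hjS' : j ∉ S' := fun h => hjU' (hS' h)
            have h2 := hx (insert j S')
              (Finset.insert_subset hjU (hS'.trans hU'sub))
              (by rw [Finset.card_insert_of_notMem hjS', hS'c])
            rw [mem_add_iff] at h2
            obtain ⟨p, hp, q, hq, hpq⟩ := h2
            obtain ⟨a, ha, b, hb, r, hd⟩ := sq_insert_decomp hp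
            rw [mem_add_iff]
            refine ⟨a, ha, b * f j + r * (f j) ^ 2 + q, ?_, by linear_combination hpq + hd⟩
            refine Ideal.add_mem _ (Ideal.add_mem _ ?_ ?_) ?_
            · exact span_singleton_le_pS (Finset.mem_insert_self j W)
                (Ideal.mem_span_singleton.mpr ⟨b, mul_comm _ _⟩)
            · exact span_singleton_le_pS (Finset.mem_insert_self j W)
                (Ideal.mem_span_singleton.mpr ⟨f j * r, by ring⟩)
            · exact pS_mono (Finset.subset_insert j W) hq
        -- decompose : x = w₁ + w₂ + ω + ρ * f j
        rw [mem_add_iff] at hstep1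
        obtain ⟨ww, hww, qq, hqq, hwq⟩ := hstep1
        rw [mem_add_iff] at hww
        obtain ⟨w₁, hw₁, w₂, hw₂, hwd⟩ := hww
        rw [pS_insert, mem_add_iff] at hqq
        obtain ⟨ω, hω, mm, hmm, hmd⟩ := hqq
        rw [Ideal.mem_span_singleton] at hmm
        obtain ⟨ρ, rfl⟩ := hmm
        have hX : x = w₁ + w₂ + ω + ρ * f j := by linear_combination -hwq - hwd - hmd
        -- membership facts for w₁, w₂
        have hw₁T : ∀ T : Finset ι, T ⊆ U' → T.card = e → w₁ ∈ pS f T ^ 2 := by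
          intro T hT hTc
          refine AW0 hk (Finset.card_pos.mp (by omega)) (by omega) ?_
          intro T' h1 h2
          exact IeD_le_pS (h1.trans hT) (by omega) hw₁
        have hw₁S : ∀ S : Finset ι, S ⊆ U' → S.card = e + 1 → w₁ ∈ pS f S ^ 2 := by
          intro S hS hSc
          refine AW0 hk (Finset.card_pos.mp (by omega)) (by omega) ?_
          intro T' h1 h2
          exact IeD_le_pS_of_le (h1.trans hS) (by omega) hw₁
        have hw₂T : ∀ T : Finset ι, T ⊆ U' → T.card = e → w₂ ∈ pS f T ^ 2 := by
          intro T hT hTc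
          exact sq_le_of_le (IeD_le_pS hT (by omega)) hw₂
        have hw₂S : ∀ S : Finset ι, S ⊆ U' → S.card = e + 1 → w₂ ∈ pS f S ^ 2 := by
          intro S hS hSc
          exact sq_le_of_le (IeD_le_pS_of_le hS (by omega)) hw₂
        -- ρ ∈ pS S ^ 2 + pS W for all (e+1)-subsets S of U'
        have hρS : ∀ S : Finset ι, S ⊆ U' → S.card = e + 1 → ρ ∈ pS f S ^ 2 + pS f W := by
          intro S hS hSc
          have hρfj : ρ * f j ∈ pS f S ^ 2 + pS f W := by
            have h2 := hx S (hS.trans hU'sub) hSc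
            rw [mem_add_iff] at h2 ⊢
            obtain ⟨p, hp, q, hq, hpq⟩ := h2
            refine ⟨p - w₁ - w₂, ?_, q - ω, Ideal.sub_mem _ hq hω, by linear_combination hpq + hX⟩
            exact Ideal.sub_mem _ (Ideal.sub_mem _ hp (hw₁S S hS hSc)) (hw₂S S hS hSc)
          refine P2W hk S W j (Finset.disjoint_of_subset_left (hS.trans hU'sub) hdisj)
            (fun h => hjU' (hS h)) hjW (by omega) ρ hρfj
        -- ρ ∈ pS T + pS (insert j W) for all e-subsets T of U'
        have hρT : ∀ T : Finset ι, T ⊆ U' → T.card = e →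
            ρ ∈ pS f T + pS f (insert j W) := by
          intro T hT hTc
          have hjT : j ∉ T := fun h => hjU' (hT h)
          have h2 := hx (insert j T) (Finset.insert_subset hjU (hT.trans hU'sub))
            (by rw [Finset.card_insert_of_notMem hjT, hTc])
          rw [mem_add_iff] at h2
          obtain ⟨p, hp, q, hq, hpq⟩ := h2
          obtain ⟨a, ha, b, hb, r, hd⟩ := sq_insert_decomp hp
          have hkey : (ρ - b - r * f j) * f j ∈ pS f T ^ 2 + pS f W := by
            rw [mem_add_iff]
            refine ⟨a - w₁ - w₂, ?_, q - ω, Ideal.sub_mem _ hq hω,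
              by linear_combination hpq + hd + hX⟩
            exact Ideal.sub_mem _ (Ideal.sub_mem _ ha (hw₁T T hT hTc)) (hw₂T T hT hTc)
          have hkey2 : ρ - b - r * f j ∈ pS f T ^ 2 + pS f W := by
            refine P2W hk T W j (Finset.disjoint_of_subset_left (hT.trans hU'sub) hdisj)
              hjT hjW (by omega) _ hkey
          rw [mem_add_iff] at hkey2
          obtain ⟨a₂, ha₂, w₃, hw₃, hkd⟩ := hkey2
          rw [mem_add_iff]
          refine ⟨a₂ + b, Ideal.add_mem _ (sq_le_self _ ha₂) hb,
            r * f j + w₃, ?_, by linear_combination hkd⟩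
          refine Ideal.add_mem _ ?_ (pS_mono (Finset.subset_insert j W) hw₃)
          exact span_singleton_le_pS (Finset.mem_insert_self j W)
            (Ideal.mem_span_singleton.mpr ⟨r, mul_comm _ _⟩)
        -- apply G4W : ρ = θ + ω₂ + σ * f j
        have hG4 : ρ ∈ IeD f e U' + pS f (insert j W) := by
          refine G4W hk U' e (insert j W) ρ ?_ ?_ hρT
          · simp only [Finset.disjoint_insert_right]; exact ⟨hjU', hdisj'⟩
          · rw [Finset.card_insert_of_notMem hjW]; omega
        rw [mem_add_iff] at hG4
        obtain ⟨θ, hθ, qq₂, hqq₂, hq₂d⟩ := hG4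
        rw [pS_insert, mem_add_iff] at hqq₂
        obtain ⟨ω₂, hω₂, mm₂, hmm₂, hm₂d⟩ := hqq₂
        rw [Ideal.mem_span_singleton] at hmm₂
        obtain ⟨σ, rfl⟩ := hmm₂
        have hρeq : ρ = θ + ω₂ + σ * f j := by linear_combination -hq₂d - hm₂d
        -- θ ∈ pS S ^ 2 for all (e+1)-subsets
        have hθS : ∀ S : Finset ι, S ⊆ U' → S.card = e + 1 → θ ∈ pS f S ^ 2 := by
          intro S hS hSc
          refine AW0 hk (Finset.card_pos.mp (by omega)) (by omega) ?_
          intro T' h1 h2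
          exact IeD_le_pS (h1.trans hS) (by omega) hθ
        -- σ ∈ pS S ^ 2 + pS W for all (e+1)-subsets of U'
        have hσS : ∀ S : Finset ι, S ⊆ U' → S.card = e + 1 → σ ∈ pS f S ^ 2 + pS f W := by
          intro S hS hSc
          have h1 : σ * f j * f j ∈ pS f S ^ 2 + pS f W := by
            have h2 := hρS S hS hSc
            rw [mem_add_iff] at h2 ⊢
            obtain ⟨p, hp, q, hq, hpq⟩ := h2
            refine ⟨p * f j - θ * f j, ?_, q * f j - ω₂ * f j, ?_, ?_⟩
            · exact Ideal.sub_mem _ (Ideal.mul_mem_right _ _ hp)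
                (Ideal.mul_mem_right _ _ (hθS S hS hSc))
            · exact Ideal.sub_mem _ (Ideal.mul_mem_right _ _ hq)
                (Ideal.mul_mem_right _ _ hω₂)
            · linear_combination (f j) * hpq + (f j) * hρeq
          have hdS : Disjoint S W := Finset.disjoint_of_subset_left (hS.trans hU'sub) hdisj
          have hjS : j ∉ S := fun h => hjU' (hS h)
          refine P2W hk S W j hdS hjS hjW (by omega) σ ?_
          exact P2W hk S W j hdS hjS hjW (by omega) (σ * f j) h1
        -- apply the same-c induction hypothesis to σ over U'
        have hσ : σ ∈ IeD f e U' + IeD f (e + 1) U' ^ 2 + pS f W := by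
          refine ihN e U' W σ (by omega) hdisj' (by omega) ?_
          intro S hS hSc
          exact hσS S hS hSc
        rw [mem_add_iff] at hσ
        obtain ⟨ss, hss, σ₃, hσ₃, hsd⟩ := hσ
        rw [mem_add_iff] at hss
        obtain ⟨σ₁, hσ₁, σ₂, hσ₂, hsd2⟩ := hss
        have hσeq : σ = σ₁ + σ₂ + σ₃ := by linear_combination -hsd - hsd2
        -- final assembly
        rw [mem_add_iff]
        refine ⟨(w₁ + θ * f j + σ₁ * f j * f j) + (w₂ + σ₂ * (f j) ^ 2), ?_,
          ω + ω₂ * f j + σ₃ * (f j) ^ 2, ?_, ?_⟩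
        · rw [mem_add_iff]
          refine ⟨w₁ + θ * f j + σ₁ * f j * f j, ?_, w₂ + σ₂ * (f j) ^ 2, ?_, rfl⟩
          · refine Ideal.add_mem _ (Ideal.add_mem _ ?_ ?_) ?_
            · exact IeD_erase_le j (by omega) hw₁
            · exact mul_f_mem_IeD hjU hθ
            · exact Ideal.mul_mem_right _ _ (mul_f_mem_IeD hjU hσ₁)
          · refine Ideal.add_mem _ ?_ ?_
            · exact sq_le_of_le (IeD_erase_le j (by omega)) hw₂
            · exact mul_f_sq_mem_sq hjU hσ₂
        · refine Ideal.add_mem _ (Ideal.add_mem _ hω ?_) ?_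
          · exact Ideal.mul_mem_right _ _ hω₂
          · exact Ideal.mul_mem_right _ _ hσ₃
        · linear_combination -hX - (f j) * hρeq - (f j)^2 * hσeq

lemma pS_def (f : ι → R) (T : Finset ι) : pS f T = Ideal.span (f '' ↑T) := rfl

end StarCfg


open MvPolynomial

/-- The star configuration ideal `I_{e,F} = ⋂_{|S| = e} ⟨F_i : i ∈ S⟩`. -/
noncomputable def starIdeal {k : Type*} [Field k] {n s : ℕ}
    (F : Fin s → MvPolynomial (Fin (n + 1)) k) (e : ℕ) :
    Ideal (MvPolynomial (Fin (n + 1)) k) :=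
  ⨅ (S : Finset (Fin s)) (_ : S.card = e), Ideal.span (F '' ↑S)

/-- The `m`-th symbolic power `I_{e,F}^{(m)} = ⋂_{|S| = e} ⟨F_i : i ∈ S⟩^m`. -/
noncomputable def starSymb {k : Type*} [Field k] {n s : ℕ}
    (F : Fin s → MvPolynomial (Fin (n + 1)) k) (e m : ℕ) :
    Ideal (MvPolynomial (Fin (n + 1)) k) :=
  ⨅ (S : Finset (Fin s)) (_ : S.card = e), (Ideal.span (F '' ↑S)) ^ m

theorem star_symbolic_square_decomposition (k : Type*) [Field k] (n s c : ℕ)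
    (hc : 2 ≤ c) (hcn : c ≤ n) (hcs : c ≤ s)
    (F : Fin s → MvPolynomial (Fin (n + 1)) k)
    (hF : ∀ i, ∃ d, 0 < d ∧ (F i).IsHomogeneous d)
    (hreg : ∀ L : List (Fin s), L.Nodup → L.length ≤ c + 1 →
      RingTheory.Sequence.IsRegular (MvPolynomial (Fin (n + 1)) k) (L.map F)) :
    starSymb F c 2 = starIdeal F (c - 1) + starIdeal F c ^ 2 := by
  classical
  -- extract the colon condition from the regular sequence hypothesis
  have hHC : StarCfg.HC F (c + 1) := by
    intro A g hgA hAcard z hz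
    rw [StarCfg.pS_def] at hz ⊢
    have hnodup : (A.toList ++ [g]).Nodup := by
      rw [List.nodup_append]
      refine ⟨A.nodup_toList, List.nodup_singleton g, ?_⟩
      intro a ha b hb hab
      rw [List.mem_singleton] at hb
      subst hb
      subst hab
      exact hgA (Finset.mem_toList.mp ha)
    have hlen : (A.toList ++ [g]).length ≤ c + 1 := by
      rw [List.length_append, Finset.length_toList]
      rw [List.length_singleton]
      omega
    have hreg' := (hreg _ hnodup hlen).toIsWeaklyRegular
    rw [List.map_append, List.map_singleton] at hreg'
    have hi : (A.toList.map F).length < ((A.toList.map F) ++ [F g]).length := by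
      simp
    have h := hreg'.regular_mod_prev (A.toList.map F).length hi
    have htake : ((A.toList.map F) ++ [F g]).take (A.toList.map F).length = A.toList.map F :=
      List.take_left
    have hget : ((A.toList.map F) ++ [F g])[(A.toList.map F).length] = F g := by
      simp
    rw [htake, hget] at h
    have hofl : Ideal.ofList (A.toList.map F) = Ideal.span (F '' ↑A) := by
      apply congrArg Ideal.span
      ext r
      constructor
      · rintro hr
        simp only [Set.mem_setOf_eq, List.mem_map] at hr
        obtain ⟨a, ha, rfl⟩ := hr
        exact ⟨a, Finset.mem_coe.mpr (Finset.mem_toList.mp ha), rfl⟩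
      · rintro ⟨a, ha, rfl⟩
        simp only [Set.mem_setOf_eq, List.mem_map]
        exact ⟨a, Finset.mem_toList.mpr (Finset.mem_coe.mp ha), rfl⟩
    rw [hofl, Ideal.smul_eq_mul, Ideal.mul_top] at h
    have hmk : (F g) • (Submodule.Quotient.mk z : MvPolynomial (Fin (n + 1)) k ⧸
          (Ideal.span (F '' ↑A) : Ideal (MvPolynomial (Fin (n + 1)) k)))
        = (F g) • (0 : MvPolynomial (Fin (n + 1)) k ⧸
          (Ideal.span (F '' ↑A) : Ideal (MvPolynomial (Fin (n + 1)) k))) := by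
      rw [smul_zero, ← Submodule.Quotient.mk_smul, Submodule.Quotient.mk_eq_zero]
      rwa [smul_eq_mul, mul_comm]
    have hconc := h hmk
    rwa [Submodule.Quotient.mk_eq_zero] at hconc
  -- membership characterizations
  have hsymb : ∀ x, x ∈ starSymb F c 2 ↔
      ∀ S : Finset (Fin s), S.card = c → x ∈ Ideal.span (F '' ↑S) ^ 2 := by
    intro x
    simp [starSymb, Ideal.mem_iInf]
  have hstar : ∀ (e : ℕ) (x : MvPolynomial (Fin (n + 1)) k), x ∈ starIdeal F e ↔
      ∀ S : Finset (Fin s), S.card = e → x ∈ Ideal.span (F '' ↑S) := by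
    intro e x
    simp [starIdeal, Ideal.mem_iInf]
  have hIeD : ∀ e : ℕ, starIdeal F e = StarCfg.IeD F e Finset.univ := by
    intro e
    ext x
    rw [hstar, StarCfg.mem_IeD_iff]
    constructor
    · intro h T _ hc'
      rw [StarCfg.pS_def]
      exact h T hc'
    · intro h T hc'
      have := h T (Finset.subset_univ T) hc'
      rwa [StarCfg.pS_def] at this
  obtain ⟨e, rfl⟩ : ∃ e, c = e + 1 := ⟨c - 1, by omega⟩
  have harith : e + 1 - 1 = e := by omega
  rw [harith]
  apply le_antisymm
  · -- the hard inclusion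
    intro x hx
    have hx' := (hsymb x).mp hx
    have key := StarCfg.MAIN hHC (e + 1 + (Finset.univ : Finset (Fin s)).card) e
      Finset.univ ∅ x le_rfl (Finset.disjoint_empty_right _)
      (by rw [Finset.card_empty]; omega) ?hyp
    case hyp =>
      intro S _ hSc
      refine StarCfg.le_add_left' ?_
      rw [StarCfg.pS_def]
      exact hx' S hSc
    rw [StarCfg.pS_empty, ← Ideal.zero_eq_bot, add_zero] at key
    rw [hIeD, hIeD]
    exact key
  · -- the easy inclusion
    intro x hx
    rw [hsymb]
    intro S hSc
    rw [StarCfg.mem_add_iff] at hx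
    obtain ⟨u, hu, v, hv, huv⟩ := hx
    rw [← huv]
    refine Ideal.add_mem _ ?_ ?_
    · have hmem : u ∈ StarCfg.pS F S ^ 2 := by
        refine StarCfg.AW0 hHC (Finset.card_pos.mp (by omega)) (by omega) ?_
        intro T' h1 h2
        rw [StarCfg.pS_def]
        exact (hstar e u).mp hu T' (by omega)
      rwa [StarCfg.pS_def] at hmem
    · refine StarCfg.sq_le_of_le ?_ hv
      intro y hy
      exact (hstar (e + 1) y).mp hy S hSc
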